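/- Let G be a countable semigroup, (T_g)_{g∈G} a measure preserving action of G on a probability space (X, μ), and A a measurable set with μ(A) > 0. Then for every ε > 0, the set R = {g ∈ G : μ(A ∩ T_g⁻¹A) > μ(A)² − ε} is syndetic, i.e., there is a finite set F ⊆ G with ⋃_{x∈F} R/x = G, where R/x = {g ∈ G : g·x ∈ R}. -/

import Mathlib

open MeasureTheory
open scoped ENNReal

namespace Stmt14Aux

variable {G : Type*} [Semigroup G] [DecidableEq G]

/-- `(seqAux g0 φ n).1` is the `n`-th element `gₙ` of the sequence, and
`(seqAux g0 φ n).2` is the finite set of all "suffix products" `gₙ * gₙ₋₁ * ⋯ * gₘ`. -/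
def seqAux (g0 : G) (φ : Finset G → G) : ℕ → G × Finset G
  | 0 => (g0, {g0})
  | n + 1 =>
    (φ (seqAux g0 φ n).2,
      insert (φ (seqAux g0 φ n).2)
        ((seqAux g0 φ n).2.image (fun x => φ (seqAux g0 φ n).2 * x)))

/-- `prodAux g0 φ n m = gₙ * gₙ₋₁ * ⋯ * gₘ` (for `m ≤ n`). -/
def prodAux (g0 : G) (φ : Finset G → G) : ℕ → ℕ → G
  | 0, _ => g0
  | n + 1, m =>
    if m = n + 1 then (seqAux g0 φ (n + 1)).1
    else (seqAux g0 φ (n + 1)).1 * prodAux g0 φ n m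

lemma prodAux_mem (g0 : G) (φ : Finset G → G) :
    ∀ n m, m ≤ n → prodAux g0 φ n m ∈ (seqAux g0 φ n).2 := by
  intro n
  induction n with
  | zero =>
    intro m hm
    interval_cases m
    simp [prodAux, seqAux]
  | succ n ih =>
    intro m hm
    by_cases h : m = n + 1
    · subst h
      rw [prodAux, if_pos rfl]
      simp [seqAux]
    · have hm' : m ≤ n := by omega
      rw [prodAux, if_neg h]
      show (φ (seqAux g0 φ n).2) * prodAux g0 φ n m ∈
        insert (φ (seqAux g0 φ n).2)
          ((seqAux g0 φ n).2.image (fun x => φ (seqAux g0 φ n).2 * x))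
      exact Finset.mem_insert_of_mem (Finset.mem_image_of_mem _ (ih m hm'))

lemma prodAux_split (g0 : G) (φ : Finset G → G) (i : ℕ) :
    ∀ j, i < j → prodAux g0 φ j (i + 1) * prodAux g0 φ i 0 = prodAux g0 φ j 0 := by
  intro j
  induction j with
  | zero => omega
  | succ n ih =>
    intro hij
    by_cases h : i = n
    · subst h
      rw [prodAux, if_pos rfl]
      conv_rhs => rw [prodAux, if_neg (by omega)]
    · have hin : i < n := by omega
      rw [prodAux, if_neg (by omega)]
      conv_rhs => rw [prodAux, if_neg (by omega)]
      rw [mul_assoc, ih hin]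

lemma prodAux_far_step (g0 : G) (φ : Finset G → G) (i n : ℕ) (h : i + 1 ≤ n) :
    prodAux g0 φ (n + 1) (i + 1) = φ (seqAux g0 φ n).2 * prodAux g0 φ n (i + 1) := by
  rw [prodAux, if_neg (by omega)]
  rfl

end Stmt14Aux

open Stmt14Aux

theorem stmt14 {G X : Type*} [Semigroup G] [Countable G] [MeasurableSpace X]
    (μ : Measure X) [IsProbabilityMeasure μ] (T : G → X → X)
    (hT : ∀ g, MeasurePreserving (T g) μ μ)
    (hact : ∀ g h : G, T (g * h) = T g ∘ T h)
    (A : Set X) (hA : MeasurableSet A) (hApos : 0 < μ A)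
    (ε : ℝ) (hε : 0 < ε) :
    ∃ F : Finset G, ∀ g : G, ∃ x ∈ F,
      (μ (A ∩ T (g * x) ⁻¹' A)).toReal > (μ A).toReal ^ 2 - ε := by
  classical
  haveI : DecidableEq G := Classical.decEq G
  rcases isEmpty_or_nonempty G with hG | hG
  · exact ⟨∅, fun g => (hG.false g).elim⟩
  by_contra hcon
  push_neg at hcon
  choose φ hφ using hcon
  set a : ℝ := (μ A).toReal with ha_def
  have ha : 0 < a := ENNReal.toReal_pos hApos.ne' (measure_ne_top μ A)
  set ε' : ℝ := min ε (a ^ 2) with hε'_def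
  have hε' : 0 < ε' := lt_min hε (by positivity)
  set c : ℝ := a ^ 2 - ε' with hc_def
  have hc0 : 0 ≤ c := by
    have : ε' ≤ a ^ 2 := min_le_right _ _
    simp [hc_def]; linarith
  have hcε : a ^ 2 - ε ≤ c := by
    have : ε' ≤ ε := min_le_left _ _
    simp [hc_def]; linarith
  set g0 : G := Classical.arbitrary G with hg0
  -- the sets B i
  set B : ℕ → Set X := fun i => T (prodAux g0 φ i 0) ⁻¹' A with hB_def
  have hB : ∀ i, MeasurableSet (B i) := fun i => (hT _).measurable hA
  have hBA : ∀ i, μ (B i) = μ A := fun i =>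
    (hT _).measure_preimage hA.nullMeasurableSet
  -- far pairs have small intersection
  have hfar : ∀ i j : ℕ, i + 2 ≤ j → (μ (B i ∩ B j)).toReal ≤ a ^ 2 - ε := by
    intro i j hij
    have hj : B j = T (prodAux g0 φ i 0) ⁻¹' (T (prodAux g0 φ j (i + 1)) ⁻¹' A) := by
      show T (prodAux g0 φ j 0) ⁻¹' A = _
      rw [← prodAux_split g0 φ i j (by omega), hact, Set.preimage_comp]
    have hinter : B i ∩ B j =
        T (prodAux g0 φ i 0) ⁻¹' (A ∩ T (prodAux g0 φ j (i + 1)) ⁻¹' A) := by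
      rw [Set.preimage_inter, ← hj]
    have hmeas : μ (B i ∩ B j) = μ (A ∩ T (prodAux g0 φ j (i + 1)) ⁻¹' A) := by
      rw [hinter]
      exact (hT _).measure_preimage
        (hA.inter ((hT _).measurable hA)).nullMeasurableSet
    rw [hmeas]
    -- write j = (j-1) + 1 and split the product
    obtain ⟨m, rfl⟩ : ∃ m, j = m + 1 := ⟨j - 1, by omega⟩
    rw [prodAux_far_step g0 φ i m (by omega)]
    exact hφ (seqAux g0 φ m).2 (prodAux g0 φ m (i + 1)) (prodAux_mem g0 φ m (i + 1) (by omega))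
  have hone : ∀ s : Set X, (μ s).toReal ≤ 1 := by
    intro s
    have h1 : μ s ≤ 1 := prob_le_one
    calc (μ s).toReal ≤ (1 : ℝ≥0∞).toReal := ENNReal.toReal_mono (by simp) h1
      _ = 1 := by simp
  -- choose n large
  set n : ℕ := ⌈3 / ε'⌉₊ + 1 with hn_def
  have hn_pos : 0 < n := Nat.succ_pos _
  -- the sum of indicators
  set S : X → ℝ := fun x => ∑ i ∈ Finset.range n, (B i).indicator (fun _ => (1:ℝ)) x with hS_def
  have hSmem : MemLp S 2 μ := by
    apply memLp_finset_sum
    intro i _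
    exact memLp_indicator_const 2 (hB i) 1 (Or.inr (measure_ne_top μ _))
  -- first moment
  have hI1 : ∫ x, S x ∂μ = n * a := by
    have : ∫ x, S x ∂μ = ∑ i ∈ Finset.range n, ∫ x, (B i).indicator (fun _ => (1:ℝ)) x ∂μ := by
      simp only [hS_def]
      exact integral_finset_sum _ (fun i _ => (integrable_const (1 : ℝ)).indicator (hB i))
    rw [this]
    have h2 : ∀ i ∈ Finset.range n, ∫ x, (B i).indicator (fun _ => (1:ℝ)) x ∂μ = a := by
      intro i _
      rw [integral_indicator_const (1:ℝ) (hB i), measureReal_def, hBA i, smul_eq_mul, mul_one]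
    rw [Finset.sum_congr rfl h2, Finset.sum_const, Finset.card_range, nsmul_eq_mul]
  -- second moment
  have hI2 : ∫ x, S x * S x ∂μ =
      ∑ i ∈ Finset.range n, ∑ j ∈ Finset.range n, (μ (B i ∩ B j)).toReal := by
    have hptwise : ∀ x, S x * S x =
        ∑ i ∈ Finset.range n, ∑ j ∈ Finset.range n, (B i ∩ B j).indicator (fun _ => (1:ℝ)) x := by
      intro x
      rw [hS_def]
      rw [Finset.sum_mul_sum]
      refine Finset.sum_congr rfl fun i _ => Finset.sum_congr rfl fun j _ => ?_
      by_cases h1 : x ∈ B i <;> by_cases h2 : x ∈ B j <;>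
        simp [Set.indicator_apply, h1, h2, Set.mem_inter_iff]
    simp_rw [hptwise]
    rw [integral_finset_sum _ (fun i _ =>
      integrable_finset_sum _ (fun j _ => (integrable_const (1 : ℝ)).indicator ((hB i).inter (hB j))))]
    refine Finset.sum_congr rfl fun i _ => ?_
    rw [integral_finset_sum _ (fun j _ => (integrable_const (1 : ℝ)).indicator ((hB i).inter (hB j)))]
    refine Finset.sum_congr rfl fun j _ => ?_
    rw [integral_indicator_const (1:ℝ) ((hB i).inter (hB j)), smul_eq_mul, mul_one, measureReal_def]
  -- Cauchy–Schwarz via nonnegativity of the variance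
  have hCS : (∫ x, S x ∂μ) ^ 2 ≤ ∫ x, S x * S x ∂μ := by
    have hvar := ProbabilityTheory.variance_nonneg S μ
    rw [ProbabilityTheory.variance_eq_sub hSmem] at hvar
    have hpow : ∫ x, (S ^ 2) x ∂μ = ∫ x, S x * S x ∂μ := by
      apply integral_congr_ae
      filter_upwards with x
      simp [sq]
    rw [hpow] at hvar
    linarith
  -- bound the double sum
  have hterm : ∀ i ∈ Finset.range n, ∀ j ∈ Finset.range n,
      (μ (B i ∩ B j)).toReal ≤ c + (if i ≤ j + 1 ∧ j ≤ i + 1 then (1 : ℝ) else 0) := by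
    intro i _ j _
    by_cases h : i ≤ j + 1 ∧ j ≤ i + 1
    · rw [if_pos h]
      have := hone (B i ∩ B j)
      linarith
    · rw [if_neg h]
      have hij : i + 2 ≤ j ∨ j + 2 ≤ i := by omega
      have : (μ (B i ∩ B j)).toReal ≤ a ^ 2 - ε := by
        rcases hij with h' | h'
        · exact hfar i j h'
        · rw [Set.inter_comm]; exact hfar j i h'
      linarith
  have hrow : ∀ i : ℕ,
      (∑ j ∈ Finset.range n, (if i ≤ j + 1 ∧ j ≤ i + 1 then (1 : ℝ) else 0)) ≤ 3 := by
    intro i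
    rw [Finset.sum_boole]
    have hsub : (Finset.range n).filter (fun j => i ≤ j + 1 ∧ j ≤ i + 1) ⊆
        ({i - 1, i, i + 1} : Finset ℕ) := by
      intro j hj
      simp only [Finset.mem_filter, Finset.mem_range] at hj
      simp only [Finset.mem_insert, Finset.mem_singleton]
      omega
    have hcard : ((Finset.range n).filter (fun j => i ≤ j + 1 ∧ j ≤ i + 1)).card ≤ 3 := by
      refine (Finset.card_le_card hsub).trans ?_
      have h1 := Finset.card_insert_le (i - 1) ({i, i + 1} : Finset ℕ)
      have h2 := Finset.card_insert_le i ({i + 1} : Finset ℕ)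
      simp only [Finset.card_singleton] at h1 h2
      omega
    exact_mod_cast hcard
  have hsum : ∑ i ∈ Finset.range n, ∑ j ∈ Finset.range n, (μ (B i ∩ B j)).toReal ≤
      n * (n * c + 3) := by
    calc ∑ i ∈ Finset.range n, ∑ j ∈ Finset.range n, (μ (B i ∩ B j)).toReal
        ≤ ∑ i ∈ Finset.range n, ∑ j ∈ Finset.range n,
            (c + (if i ≤ j + 1 ∧ j ≤ i + 1 then (1 : ℝ) else 0)) := by
          refine Finset.sum_le_sum fun i hi => Finset.sum_le_sum fun j hj => ?_
          exact hterm i hi j hj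
      _ = ∑ i ∈ Finset.range n, (n * c +
            ∑ j ∈ Finset.range n, (if i ≤ j + 1 ∧ j ≤ i + 1 then (1 : ℝ) else 0)) := by
          refine Finset.sum_congr rfl fun i _ => ?_
          rw [Finset.sum_add_distrib, Finset.sum_const, Finset.card_range, nsmul_eq_mul]
      _ ≤ ∑ i ∈ Finset.range n, (n * c + 3) := by
          refine Finset.sum_le_sum fun i _ => ?_
          have := hrow i
          linarith
      _ = n * (n * c + 3) := by
          rw [Finset.sum_const, Finset.card_range, nsmul_eq_mul]
  -- combine
  have hmain : ((n : ℝ) * a) ^ 2 ≤ n * (n * c + 3) := by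
    calc ((n : ℝ) * a) ^ 2 = (∫ x, S x ∂μ) ^ 2 := by rw [hI1]
      _ ≤ ∫ x, S x * S x ∂μ := hCS
      _ = ∑ i ∈ Finset.range n, ∑ j ∈ Finset.range n, (μ (B i ∩ B j)).toReal := hI2
      _ ≤ n * (n * c + 3) := hsum
  -- derive the contradiction
  have hnR : (3 : ℝ) / ε' ≤ (⌈3 / ε'⌉₊ : ℝ) := Nat.le_ceil _
  have hn_ge : (3 : ℝ) / ε' + 1 ≤ (n : ℝ) := by
    rw [hn_def]
    push_cast
    linarith
  have hn_pos' : (0 : ℝ) < n := by exact_mod_cast hn_pos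
  -- from hmain : n² a² ≤ n² c + 3n, and c = a² - ε', get n² ε' ≤ 3 n, so n ε' ≤ 3
  have h1 : (n : ℝ) * ε' ≤ 3 := by
    have h2 : (n : ℝ) ^ 2 * ε' ≤ 3 * n := by nlinarith [hmain]
    nlinarith
  have h2 : (3 : ℝ) < (n : ℝ) * ε' := by
    have h3 : (3 / ε' + 1) * ε' ≤ (n : ℝ) * ε' := by
      apply mul_le_mul_of_nonneg_right hn_ge (le_of_lt hε')
    have h4 : (3 / ε' + 1) * ε' = 3 + ε' := by
      field_simp
    nlinarith
  linarith
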